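/- Let G be a triangle-free graph and S a subset of its vertices. If three vertices u, v, w in S induce a path P3 in G (with v the middle vertex), then each of u, v, w has a closed neighborhood whose intersection with S is distinct from the intersection of the closed neighborhood of every other vertex of G with S. -/
import Mathlib


open SimpleGraph

/-- The closed neighborhood of a vertex. -/
def cnbr {V : Type*} (G : SimpleGraph V) (v : V) : Set V := insert v (G.neighborSet v)

/-- `C` is an identifying code of `G`: every vertex is dominated by `C` and the
closed-neighborhood traces on `C` are pairwise distinct. -/
def IsIdCode {V : Type*} (G : SimpleGraph V) (C : Set V) : Prop :=
  (∀ v, (cnbr G v ∩ C).Nonempty) ∧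
  ∀ u v : V, cnbr G u ∩ C = cnbr G v ∩ C → u = v

/-- The minimum size of an identifying code of `G`. -/
noncomputable def gammaID {V : Type*} (G : SimpleGraph V) : ℕ :=
  sInf {n | ∃ C : Set V, IsIdCode G C ∧ C.ncard = n}

theorem stmt_0 {V : Type*} (G : SimpleGraph V) (hG : G.CliqueFree 3) (S : Set V)
    (u v w : V) (hu : u ∈ S) (hv : v ∈ S) (hw : w ∈ S)
    (huv : G.Adj u v) (hvw : G.Adj v w) (huw : ¬ G.Adj u w) (hne : u ≠ w) :
    ∀ x ∈ ({u, v, w} : Set V), ∀ y : V, y ≠ x → cnbr G x ∩ S ≠ cnbr G y ∩ S := by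
  classical
  have tri : ∀ a b c : V, G.Adj a b → G.Adj a c → G.Adj b c → False := by
    intro a b c hab hac hbc
    exact hG {a, b, c} (is3Clique_triple_iff.mpr ⟨hab, hac, hbc⟩)
  have mem_cnbr : ∀ a b : V, a ∈ cnbr G b ↔ a = b ∨ G.Adj b a := by
    intro a b
    simp [cnbr, SimpleGraph.mem_neighborSet]
  intro x hx y hy heq
  have key : ∀ a : V, a ∈ S → a ∈ cnbr G x → a ∈ cnbr G y := by
    intro a haS hax
    have : a ∈ cnbr G x ∩ S := ⟨hax, haS⟩
    rw [heq] at this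
    exact this.1
  rcases hx with h | h | h <;> subst x
  · -- x = u
    have hu' : u ∈ cnbr G y := key u hu ((mem_cnbr u u).mpr (Or.inl rfl))
    have hv' : v ∈ cnbr G y := key v hv ((mem_cnbr v u).mpr (Or.inr huv))
    rcases (mem_cnbr u y).mp hu' with rfl | hyu
    · exact hy rfl
    · rcases (mem_cnbr v y).mp hv' with rfl | hyv
      · -- y = v, then w ∈ cnbr v ∩ S = cnbr u ∩ S
        have : w ∈ cnbr G u ∩ S := by
          rw [heq]; exact ⟨(mem_cnbr w v).mpr (Or.inr hvw), hw⟩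
        rcases (mem_cnbr w u).mp this.1 with rfl | h
        · exact hne rfl
        · exact huw h
      · exact tri y u v hyu hyv huv
  · -- x = v
    have hv' : v ∈ cnbr G y := key v hv ((mem_cnbr v v).mpr (Or.inl rfl))
    have hu' : u ∈ cnbr G y := key u hu ((mem_cnbr u v).mpr (Or.inr huv.symm))
    have hw' : w ∈ cnbr G y := key w hw ((mem_cnbr w v).mpr (Or.inr hvw))
    rcases (mem_cnbr v y).mp hv' with rfl | hyv
    · exact hy rfl
    · rcases (mem_cnbr u y).mp hu' with rfl | hyu
      · rcases (mem_cnbr w u).mp hw' with rfl | h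
        · exact hne rfl
        · exact huw h
      · exact tri y u v hyu hyv huv
  · -- x = w
    have hw' : w ∈ cnbr G y := key w hw ((mem_cnbr w w).mpr (Or.inl rfl))
    have hv' : v ∈ cnbr G y := key v hv ((mem_cnbr v w).mpr (Or.inr hvw.symm))
    rcases (mem_cnbr w y).mp hw' with rfl | hyw
    · exact hy rfl
    · rcases (mem_cnbr v y).mp hv' with rfl | hyv
      · have : u ∈ cnbr G w ∩ S := by
          rw [heq]; exact ⟨(mem_cnbr u v).mpr (Or.inr huv.symm), hu⟩
        rcases (mem_cnbr u w).mp this.1 with rfl | h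
        · exact hne rfl
        · exact huw h.symm
      · exact tri y v w hyv hyw hvw
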